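/- Let H₁, H₂, H₃ be complex Hilbert spaces and A ∈ B(H₁), B ∈ B(H₂,H₁), C ∈ B(H₂), D ∈ B(H₃,H₂), E ∈ B(H₃), and suppose the 2×2 operator matrices [[A, B],[B*, C]] and [[C, D],[D*, E]] are positive definite. For X ∈ B(H₃,H₁) let M(X) = [[A, B, X],[B*, C, D],[X*, D*, E]] on H₁ ⊕ H₂ ⊕ H₃. Then X₀ := B C⁻¹ D is the unique X ∈ B(H₃,H₁) such that M(X) is positive definite and the (1,3) entry of the 3×3 operator matrix M(X)⁻¹ is zero. -/

import Mathlib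

/- STATEMENT 5: uniqueness part of the 3×3 positive definite operator matrix completion
   problem: `X₀ = B C⁻¹ D` is the unique `X` such that `M(X)` is positive definite and the
   `(1,3)` entry of `M(X)⁻¹` is zero. -/

noncomputable section

open ContinuousLinearMap

set_option maxHeartbeats 0

section MyHelpers

lemma my_cancel_left {E F : Type*} [NormedAddCommGroup E] [NormedSpace ℂ E]
    [NormedAddCommGroup F] [NormedSpace ℂ F]
    {T U : E →L[ℂ] E} (h : T ∘L U = 1) (f : F →L[ℂ] E) : T ∘L (U ∘L f) = f := by
  rw [← ContinuousLinearMap.comp_assoc, h, ContinuousLinearMap.one_def,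
    ContinuousLinearMap.id_comp]

lemma my_re_symm {E : Type*} [NormedAddCommGroup E] [InnerProductSpace ℂ E]
    (x y : E) : (inner ℂ x y : ℂ).re = (inner ℂ y x : ℂ).re := by
  rw [← inner_conj_symm y x, Complex.conj_re]

lemma my_re_adj {E F : Type*} [NormedAddCommGroup E] [InnerProductSpace ℂ E] [CompleteSpace E]
    [NormedAddCommGroup F] [InnerProductSpace ℂ F] [CompleteSpace F]
    (T : E →L[ℂ] F) (x : F) (y : E) :
    (inner ℂ ((adjoint T) x) y : ℂ).re = (inner ℂ (T y) x : ℂ).re := by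
  rw [adjoint_inner_left, my_re_symm]

variable {E₀ : Type*} [NormedAddCommGroup E₀] [InnerProductSpace ℂ E₀] [CompleteSpace E₀]

lemma my_isUnit_of_coercive (T : E₀ →L[ℂ] E₀) {ε : ℝ} (hε : 0 < ε)
    (h : ∀ x : E₀, ε * ‖x‖ ^ 2 ≤ (inner ℂ (T x) x : ℂ).re) : IsUnit T := by
  have hlow : ∀ x : E₀, ε * ‖x‖ ≤ ‖T x‖ := by
    intro x
    rcases eq_or_ne x 0 with rfl | hx
    · simp
    · have h1 : ε * ‖x‖ ^ 2 ≤ ‖T x‖ * ‖x‖ := by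
        refine (h x).trans ?_
        calc (inner ℂ (T x) x : ℂ).re ≤ ‖(inner ℂ (T x) x : ℂ)‖ := Complex.re_le_norm _
          _ ≤ ‖T x‖ * ‖x‖ := norm_inner_le_norm _ _
      have hx' : 0 < ‖x‖ := norm_pos_iff.mpr hx
      nlinarith
  have hanti : AntilipschitzWith (⟨ε, hε.le⟩ : NNReal)⁻¹ T := by
    refine T.antilipschitz_of_bound fun x => ?_
    have := hlow x
    have h2 : ‖x‖ ≤ ε⁻¹ * ‖T x‖ := by
      rw [inv_mul_eq_div, le_div_iff₀ hε]
      linarith [this]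
    convert h2 using 2
    exact NNReal.coe_inv _
  have hinj : LinearMap.ker (T : E₀ →ₗ[ℂ] E₀) = ⊥ := LinearMap.ker_eq_bot.mpr hanti.injective
  have hclosed : IsClosed (Set.range T) := hanti.isClosed_range T.uniformContinuous
  have hclosed' : IsClosed ((LinearMap.range (T : E₀ →ₗ[ℂ] E₀) : Submodule ℂ E₀) : Set E₀) := by
    simpa [LinearMap.coe_range] using hclosed
  haveI : CompleteSpace (LinearMap.range (T : E₀ →ₗ[ℂ] E₀) : Submodule ℂ E₀) := hclosed'.completeSpace_coe
  have hsurj : LinearMap.range (T : E₀ →ₗ[ℂ] E₀) = ⊤ := by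
    rw [← Submodule.orthogonal_eq_bot_iff, Submodule.eq_bot_iff]
    intro v hv
    have h0 : (inner ℂ (T v) v : ℂ) = 0 := hv (T v) (LinearMap.mem_range_self _ v)
    have := h v
    rw [h0] at this
    norm_num at this
    have : ‖v‖ ^ 2 ≤ 0 := by nlinarith
    have : ‖v‖ = 0 := by nlinarith [sq_nonneg ‖v‖, norm_nonneg v]
    simpa using this
  let e := ContinuousLinearEquiv.ofBijective T hinj hsurj
  refine ⟨⟨T, (e.symm : E₀ →L[ℂ] E₀), ?_, ?_⟩, rfl⟩
  · ext x; simp [e, ContinuousLinearMap.mul_apply]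
  · ext x; simp [e, ContinuousLinearMap.mul_apply]

end MyHelpers

lemma my_bound {ε₁ ε₂ K L x y z y' qx qy qz : ℝ} (hε₁ : 0 < ε₁) (hε₂ : 0 < ε₂)
    (hK0 : 0 ≤ K) (hL0 : 0 ≤ L) (hx0 : 0 ≤ x) (hy0 : 0 ≤ y) (hz0 : 0 ≤ z) (hy'0 : 0 ≤ y')
    (hx1 : ε₁ * x ^ 2 ≤ qx) (hy1 : ε₁ * y' ^ 2 ≤ qy) (hz1 : ε₂ * z ^ 2 ≤ qz)
    (hy2 : y ≤ y' + K * x + L * z) :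
    min ε₁ ε₂ / (3 * (1 + K ^ 2 + L ^ 2)) * (x ^ 2 + y ^ 2 + z ^ 2) ≤ qx + qy + qz := by
  set εm := min ε₁ ε₂ with hεm
  have hεm0 : 0 < εm := lt_min hε₁ hε₂
  set c := 3 * (1 + K ^ 2 + L ^ 2) with hc
  have hc0 : (0:ℝ) < c := by positivity
  have hsq : y ^ 2 ≤ 3 * (y' ^ 2 + (K * x) ^ 2 + (L * z) ^ 2) := by
    nlinarith [sq_nonneg (y' - K * x), sq_nonneg (y' - L * z), sq_nonneg (K * x - L * z),
      mul_self_le_mul_self hy0 hy2, mul_nonneg hK0 hx0, mul_nonneg hL0 hz0]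
  have h2 : x ^ 2 + y ^ 2 + z ^ 2 ≤ c * (x ^ 2 + y' ^ 2 + z ^ 2) := by
    rw [hc]
    nlinarith [hsq, mul_nonneg (sq_nonneg K) (sq_nonneg y'), mul_nonneg (sq_nonneg K) (sq_nonneg z),
      mul_nonneg (sq_nonneg L) (sq_nonneg x), mul_nonneg (sq_nonneg L) (sq_nonneg y'),
      sq_nonneg x, sq_nonneg z, sq_nonneg y']
  have h3 : εm * (x ^ 2 + y' ^ 2 + z ^ 2) ≤ qx + qy + qz := by
    have hm1 := mul_le_mul_of_nonneg_right (min_le_left ε₁ ε₂) (sq_nonneg x)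
    have hm2 := mul_le_mul_of_nonneg_right (min_le_left ε₁ ε₂) (sq_nonneg y')
    have hm3 := mul_le_mul_of_nonneg_right (min_le_right ε₁ ε₂) (sq_nonneg z)
    rw [← hεm] at hm1 hm2 hm3
    nlinarith [hx1, hy1, hz1]
  have h4 : εm / c * (x ^ 2 + y ^ 2 + z ^ 2) ≤ εm * (x ^ 2 + y' ^ 2 + z ^ 2) := by
    rw [div_mul_eq_mul_div, div_le_iff₀ hc0]
    have h5 := mul_le_mul_of_nonneg_left h2 hεm0.le
    nlinarith [h5]
  linarith [h3, h4]


lemma my_norms_zero {ε a b c : ℝ} (hε : 0 < ε) (h : ε * (a ^ 2 + b ^ 2 + c ^ 2) ≤ 0)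
    (hb : 0 ≤ b) (hc : 0 ≤ c) : b = 0 ∧ c = 0 := by
  have ha2 : 0 ≤ a ^ 2 := sq_nonneg a
  have hb2 : 0 ≤ b ^ 2 := sq_nonneg b
  have hc2 : 0 ≤ c ^ 2 := sq_nonneg c
  have hsum : a ^ 2 + b ^ 2 + c ^ 2 ≤ 0 := by
    by_contra hpos
    push_neg at hpos
    nlinarith
  constructor
  · have : b ^ 2 = 0 := by linarith
    have := pow_eq_zero_iff (n := 2) (by norm_num) |>.mp this
    linarith [this, hb]
  · have : c ^ 2 = 0 := by linarith
    have := pow_eq_zero_iff (n := 2) (by norm_num) |>.mp this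
    linarith [this, hc]



variable {H₁ H₂ H₃ : Type*}
  [NormedAddCommGroup H₁] [InnerProductSpace ℂ H₁] [CompleteSpace H₁]
  [NormedAddCommGroup H₂] [InnerProductSpace ℂ H₂] [CompleteSpace H₂]
  [NormedAddCommGroup H₃] [InnerProductSpace ℂ H₃] [CompleteSpace H₃]

lemma my_quad_eq (A : H₁ →L[ℂ] H₁) (B : H₂ →L[ℂ] H₁) (X : H₃ →L[ℂ] H₁)
    (C : H₂ →L[ℂ] H₂) (D : H₃ →L[ℂ] H₂) (E : H₃ →L[ℂ] H₃) (v₁ : H₁) (v₂ : H₂) (v₃ : H₃) :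
    (inner ℂ (A v₁) v₁ : ℂ).re + (inner ℂ (C v₂) v₂ : ℂ).re + (inner ℂ (E v₃) v₃ : ℂ).re
      + 2 * (inner ℂ (B v₂) v₁ : ℂ).re + 2 * (inner ℂ (X v₃) v₁ : ℂ).re
      + 2 * (inner ℂ (D v₃) v₂ : ℂ).re
    = (inner ℂ (A v₁ + B v₂ + X v₃) v₁ + inner ℂ (adjoint B v₁ + C v₂ + D v₃) v₂
        + inner ℂ (adjoint X v₁ + adjoint D v₂ + E v₃) v₃ : ℂ).re := by
  simp only [inner_add_left, Complex.add_re, my_re_adj]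
  ring

lemma my_schur_quad (A : H₁ →L[ℂ] H₁) (B : H₂ →L[ℂ] H₁)
    (C C' : H₂ →L[ℂ] H₂) (D : H₃ →L[ℂ] H₂) (E : H₃ →L[ℂ] H₃)
    (hC : adjoint C = C) (hC' : adjoint C' = C')
    (hCC' : ∀ u, C (C' u) = u) (x : H₁) (y : H₂) (z : H₃) :
    (inner ℂ (A x) x : ℂ).re + (inner ℂ (C y) y : ℂ).re + (inner ℂ (E z) z : ℂ).re
      + 2 * (inner ℂ (B y) x : ℂ).re + 2 * (inner ℂ (B (C' (D z))) x : ℂ).re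
      + 2 * (inner ℂ (D z) y : ℂ).re
    = (inner ℂ ((A - B ∘L (C' ∘L adjoint B)) x) x : ℂ).re
      + (inner ℂ (C (y + C' (adjoint B x + D z))) (y + C' (adjoint B x + D z)) : ℂ).re
      + (inner ℂ ((E - adjoint D ∘L (C' ∘L D)) z) z : ℂ).re := by
  have h1 : (inner ℂ (C y) (C' (adjoint B x)) : ℂ).re = (inner ℂ (B y) x : ℂ).re := by
    rw [← hC, adjoint_inner_left, hCC', adjoint_inner_right]
  have h2 : (inner ℂ (C y) (C' (D z)) : ℂ).re = (inner ℂ (D z) y : ℂ).re := by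
    rw [← hC, adjoint_inner_left, hCC', my_re_symm]
  have h3 : (inner ℂ (adjoint B x) y : ℂ).re = (inner ℂ (B y) x : ℂ).re := my_re_adj B x y
  have h4 : (inner ℂ (adjoint B x) (C' (adjoint B x)) : ℂ).re
      = (inner ℂ (B (C' (adjoint B x))) x : ℂ).re := by
    rw [my_re_symm, adjoint_inner_right]
  have h5 : (inner ℂ (adjoint B x) (C' (D z)) : ℂ).re = (inner ℂ (B (C' (D z))) x : ℂ).re := by
    rw [adjoint_inner_left, my_re_symm]
  have h6 : (inner ℂ (D z) (C' (adjoint B x)) : ℂ).re = (inner ℂ (B (C' (D z))) x : ℂ).re := by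
    have e : (inner ℂ (D z) (C' ((adjoint B) x)) : ℂ) = inner ℂ (C' (D z)) ((adjoint B) x) := by
      conv_lhs => rw [← hC']
      rw [adjoint_inner_right]
    rw [e, adjoint_inner_right]
  have h7 : (inner ℂ ((adjoint D) (C' (D z))) z : ℂ).re = (inner ℂ (D z) (C' (D z)) : ℂ).re := by
    rw [adjoint_inner_left, my_re_symm]
  simp only [map_add, inner_add_left, inner_add_right, inner_sub_left, Complex.add_re,
    Complex.sub_re, ContinuousLinearMap.sub_apply, comp_apply, hCC']
  linarith [h1, h2, h3, h4, h5, h6, h7]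


/-- Positive definiteness of the 2×2 operator matrix `[[A, B], [B*, C]]` regarded as an
operator on the Hilbert-space direct sum. -/
def Pos2 {E F : Type*} [NormedAddCommGroup E] [InnerProductSpace ℂ E] [CompleteSpace E]
    [NormedAddCommGroup F] [InnerProductSpace ℂ F] [CompleteSpace F]
    (A : E →L[ℂ] E) (B : F →L[ℂ] E) (C : F →L[ℂ] F) : Prop :=
  IsSelfAdjoint A ∧ IsSelfAdjoint C ∧
  ∃ ε : ℝ, 0 < ε ∧ ∀ (x : E) (y : F),
    ε * (‖x‖ ^ 2 + ‖y‖ ^ 2) ≤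
      (inner ℂ (A x) x : ℂ).re + 2 * (inner ℂ (B y) x : ℂ).re + (inner ℂ (C y) y : ℂ).re

/-- Positive definiteness of `M(X) = [[A,B,X],[B*,C,D],[X*,D*,E]]` on `H₁ ⊕ H₂ ⊕ H₃`. -/
def Pos3 (A : H₁ →L[ℂ] H₁) (B : H₂ →L[ℂ] H₁) (X : H₃ →L[ℂ] H₁)
    (C : H₂ →L[ℂ] H₂) (D : H₃ →L[ℂ] H₂) (E : H₃ →L[ℂ] H₃) : Prop :=
  IsSelfAdjoint A ∧ IsSelfAdjoint C ∧ IsSelfAdjoint E ∧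
  ∃ ε : ℝ, 0 < ε ∧ ∀ (x : H₁) (y : H₂) (z : H₃),
    ε * (‖x‖ ^ 2 + ‖y‖ ^ 2 + ‖z‖ ^ 2) ≤
      (inner ℂ (A x) x : ℂ).re + (inner ℂ (C y) y : ℂ).re + (inner ℂ (E z) z : ℂ).re
      + 2 * (inner ℂ (B y) x : ℂ).re + 2 * (inner ℂ (X z) x : ℂ).re + 2 * (inner ℂ (D z) y : ℂ).re

/-- The 3×3 operator matrix `N = (N i j)` is a two-sided inverse of
`M(X) = [[A,B,X],[B*,C,D],[X*,D*,E]]`, written out entrywise. -/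
def Inv3 (A : H₁ →L[ℂ] H₁) (B : H₂ →L[ℂ] H₁) (X : H₃ →L[ℂ] H₁)
    (C : H₂ →L[ℂ] H₂) (D : H₃ →L[ℂ] H₂) (E : H₃ →L[ℂ] H₃)
    (N11 : H₁ →L[ℂ] H₁) (N12 : H₂ →L[ℂ] H₁) (N13 : H₃ →L[ℂ] H₁)
    (N21 : H₁ →L[ℂ] H₂) (N22 : H₂ →L[ℂ] H₂) (N23 : H₃ →L[ℂ] H₂)
    (N31 : H₁ →L[ℂ] H₃) (N32 : H₂ →L[ℂ] H₃) (N33 : H₃ →L[ℂ] H₃) : Prop :=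
  -- M(X) ∘ N = I
  (A ∘L N11 + B ∘L N21 + X ∘L N31 = 1) ∧
  (A ∘L N12 + B ∘L N22 + X ∘L N32 = 0) ∧
  (A ∘L N13 + B ∘L N23 + X ∘L N33 = 0) ∧
  (adjoint B ∘L N11 + C ∘L N21 + D ∘L N31 = 0) ∧
  (adjoint B ∘L N12 + C ∘L N22 + D ∘L N32 = 1) ∧
  (adjoint B ∘L N13 + C ∘L N23 + D ∘L N33 = 0) ∧
  (adjoint X ∘L N11 + adjoint D ∘L N21 + E ∘L N31 = 0) ∧
  (adjoint X ∘L N12 + adjoint D ∘L N22 + E ∘L N32 = 0) ∧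
  (adjoint X ∘L N13 + adjoint D ∘L N23 + E ∘L N33 = 1) ∧
  -- N ∘ M(X) = I
  (N11 ∘L A + N12 ∘L adjoint B + N13 ∘L adjoint X = 1) ∧
  (N11 ∘L B + N12 ∘L C + N13 ∘L adjoint D = 0) ∧
  (N11 ∘L X + N12 ∘L D + N13 ∘L E = 0) ∧
  (N21 ∘L A + N22 ∘L adjoint B + N23 ∘L adjoint X = 0) ∧
  (N21 ∘L B + N22 ∘L C + N23 ∘L adjoint D = 1) ∧
  (N21 ∘L X + N22 ∘L D + N23 ∘L E = 0) ∧
  (N31 ∘L A + N32 ∘L adjoint B + N33 ∘L adjoint X = 0) ∧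
  (N31 ∘L B + N32 ∘L C + N33 ∘L adjoint D = 0) ∧
  (N31 ∘L X + N32 ∘L D + N33 ∘L E = 1)

/-- `M(X)` is positive definite and the `(1,3)` entry of `M(X)⁻¹` is zero. -/
def GoodCompletion (A : H₁ →L[ℂ] H₁) (B : H₂ →L[ℂ] H₁) (C : H₂ →L[ℂ] H₂)
    (D : H₃ →L[ℂ] H₂) (E : H₃ →L[ℂ] H₃) (X : H₃ →L[ℂ] H₁) : Prop :=
  Pos3 A B X C D E ∧
  ∃ (N11 : H₁ →L[ℂ] H₁) (N12 : H₂ →L[ℂ] H₁) (N13 : H₃ →L[ℂ] H₁)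
    (N21 : H₁ →L[ℂ] H₂) (N22 : H₂ →L[ℂ] H₂) (N23 : H₃ →L[ℂ] H₂)
    (N31 : H₁ →L[ℂ] H₃) (N32 : H₂ →L[ℂ] H₃) (N33 : H₃ →L[ℂ] H₃),
      Inv3 A B X C D E N11 N12 N13 N21 N22 N23 N31 N32 N33 ∧ N13 = 0

theorem three_by_three_completion_unique
    (A : H₁ →L[ℂ] H₁) (B : H₂ →L[ℂ] H₁) (C : H₂ →L[ℂ] H₂)
    (D : H₃ →L[ℂ] H₂) (E : H₃ →L[ℂ] H₃)
    (h1 : Pos2 A B C) (h2 : Pos2 C D E) :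
    GoodCompletion A B C D E (B ∘L Ring.inverse C ∘L D) ∧
      ∀ X : H₃ →L[ℂ] H₁, GoodCompletion A B C D E X → X = B ∘L Ring.inverse C ∘L D := by
  obtain ⟨hA, hCsa, ε₁, hε₁, hq1⟩ := h1
  obtain ⟨-, hEsa, ε₂, hε₂, hq2⟩ := h2
  have hCadj : adjoint C = C := by rw [← ContinuousLinearMap.star_eq_adjoint]; exact hCsa
  have hEadj : adjoint E = E := by rw [← ContinuousLinearMap.star_eq_adjoint]; exact hEsa
  have hAadj : adjoint A = A := by rw [← ContinuousLinearMap.star_eq_adjoint]; exact hA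
  -- C is coercive hence invertible
  have hCco : ∀ y : H₂, ε₁ * ‖y‖ ^ 2 ≤ (inner ℂ (C y) y : ℂ).re := by
    intro y
    have := hq1 0 y
    simpa using this
  have hCu : IsUnit C := my_isUnit_of_coercive C hε₁ hCco
  set C' := Ring.inverse C with hC'def
  have hCC' : C ∘L C' = 1 := by
    rw [← ContinuousLinearMap.mul_def]; exact Ring.mul_inverse_cancel C hCu
  have hC'C : C' ∘L C = 1 := by
    rw [← ContinuousLinearMap.mul_def]; exact Ring.inverse_mul_cancel C hCu
  have hCC'v : ∀ u, C (C' u) = u := fun u => by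
    have := congrArg (fun T : H₂ →L[ℂ] H₂ => T u) hCC'
    simpa using this
  have hC'Cv : ∀ u, C' (C u) = u := fun u => by
    have := congrArg (fun T : H₂ →L[ℂ] H₂ => T u) hC'C
    simpa using this
  have hC'adj : adjoint C' = C' := by
    have hadj1 : adjoint C' ∘L C = 1 := by
      rw [← hCadj, ← adjoint_comp, hCC', ContinuousLinearMap.one_def, adjoint_id]
    calc adjoint C' = (adjoint C' ∘L C) ∘L C' := by
          rw [ContinuousLinearMap.comp_assoc, hCC', ContinuousLinearMap.one_def,
            ContinuousLinearMap.comp_id]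
      _ = C' := by rw [hadj1, ContinuousLinearMap.one_def, ContinuousLinearMap.id_comp]
  -- Schur complements
  set S₁ := A - B ∘L (C' ∘L adjoint B) with hS₁def
  set S₂ := E - adjoint D ∘L (C' ∘L D) with hS₂def
  have hAeq : A = S₁ + B ∘L (C' ∘L adjoint B) := by rw [hS₁def]; abel
  have hEeq : E = S₂ + adjoint D ∘L (C' ∘L D) := by rw [hS₂def]; abel
  -- coercivity of the Schur complements
  have hS₁co : ∀ x : H₁, ε₁ * ‖x‖ ^ 2 ≤ (inner ℂ (S₁ x) x : ℂ).re := by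
    intro x
    have hq := hq1 x (-(C' (adjoint B x)))
    have e1 : (inner ℂ (B (-(C' (adjoint B x)))) x : ℂ).re
        = -(inner ℂ (B (C' (adjoint B x))) x : ℂ).re := by simp
    have e2 : (inner ℂ (C (-(C' (adjoint B x)))) (-(C' (adjoint B x))) : ℂ).re
        = (inner ℂ (B (C' (adjoint B x))) x : ℂ).re := by
      simp only [map_neg, inner_neg_neg, hCC'v]
      rw [my_re_symm, adjoint_inner_right]
    rw [e1, e2] at hq
    have e3 : (inner ℂ (S₁ x) x : ℂ).re
        = (inner ℂ (A x) x : ℂ).re - (inner ℂ (B (C' (adjoint B x))) x : ℂ).re := by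
      rw [hS₁def]
      simp [inner_sub_left, Complex.sub_re]
    rw [e3]
    have hn : (0:ℝ) ≤ ‖(-(C' (adjoint B x)))‖ ^ 2 := sq_nonneg _
    nlinarith [hq, hn, hε₁]
  have hS₂co : ∀ z : H₃, ε₂ * ‖z‖ ^ 2 ≤ (inner ℂ (S₂ z) z : ℂ).re := by
    intro z
    have hq := hq2 (-(C' (D z))) z
    have e1 : (inner ℂ (D z) (-(C' (D z))) : ℂ).re = -(inner ℂ (D z) (C' (D z)) : ℂ).re := by simp
    have e2 : (inner ℂ (C (-(C' (D z)))) (-(C' (D z))) : ℂ).re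
        = (inner ℂ (D z) (C' (D z)) : ℂ).re := by
      simp only [map_neg, inner_neg_neg, hCC'v]
    rw [e1, e2] at hq
    have e3 : (inner ℂ (S₂ z) z : ℂ).re
        = (inner ℂ (E z) z : ℂ).re - (inner ℂ (D z) (C' (D z)) : ℂ).re := by
      rw [hS₂def]
      simp only [ContinuousLinearMap.sub_apply, comp_apply, inner_sub_left, Complex.sub_re]
      rw [adjoint_inner_left, my_re_symm (C' (D z)) (D z)]
    rw [e3]
    have hn : (0:ℝ) ≤ ‖(-(C' (D z)))‖ ^ 2 := sq_nonneg _
    nlinarith [hq, hn, hε₂]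
  have hS₁u : IsUnit S₁ := my_isUnit_of_coercive S₁ hε₁ hS₁co
  have hS₂u : IsUnit S₂ := my_isUnit_of_coercive S₂ hε₂ hS₂co
  set S₁' := Ring.inverse S₁ with hS₁'def
  set S₂' := Ring.inverse S₂ with hS₂'def
  have hS₁S₁' : S₁ ∘L S₁' = 1 := by
    rw [← ContinuousLinearMap.mul_def]; exact Ring.mul_inverse_cancel S₁ hS₁u
  have hS₁'S₁ : S₁' ∘L S₁ = 1 := by
    rw [← ContinuousLinearMap.mul_def]; exact Ring.inverse_mul_cancel S₁ hS₁u
  have hS₂S₂' : S₂ ∘L S₂' = 1 := by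
    rw [← ContinuousLinearMap.mul_def]; exact Ring.mul_inverse_cancel S₂ hS₂u
  have hS₂'S₂ : S₂' ∘L S₂ = 1 := by
    rw [← ContinuousLinearMap.mul_def]; exact Ring.inverse_mul_cancel S₂ hS₂u
  -- the candidate completion
  have hXadj : adjoint (B ∘L C' ∘L D) = adjoint D ∘L (C' ∘L adjoint B) := by
    rw [adjoint_comp, adjoint_comp, hC'adj, ContinuousLinearMap.comp_assoc]
  constructor
  · -- existence
    constructor
    · -- Pos3
      refine ⟨hA, hCsa, hEsa, ?_⟩
      set K := ‖C' ∘L adjoint B‖ with hKdef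
      set L := ‖C' ∘L D‖ with hLdef
      have hK0 : 0 ≤ K := norm_nonneg _
      have hL0 : 0 ≤ L := norm_nonneg _
      refine ⟨min ε₁ ε₂ / (3 * (1 + K ^ 2 + L ^ 2)), by positivity, ?_⟩
      intro x y z
      have happ : (B ∘L C' ∘L D) z = B (C' (D z)) := by simp
      rw [happ]
      rw [my_schur_quad A B C C' D E hCadj hC'adj hCC'v x y z]
      set y' := y + C' (adjoint B x + D z) with hy'def
      have hx1 : ε₁ * ‖x‖ ^ 2 ≤ (inner ℂ (S₁ x) x : ℂ).re := hS₁co x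
      have hy1 : ε₁ * ‖y'‖ ^ 2 ≤ (inner ℂ (C y') y' : ℂ).re := hCco y'
      have hz1 : ε₂ * ‖z‖ ^ 2 ≤ (inner ℂ (S₂ z) z : ℂ).re := hS₂co z
      have hKx : ‖C' (adjoint B x)‖ ≤ K * ‖x‖ := by
        have := (C' ∘L adjoint B).le_opNorm x
        simpa using this
      have hLz : ‖C' (D z)‖ ≤ L * ‖z‖ := by
        have := (C' ∘L D).le_opNorm z
        simpa using this
      have htri : ‖y‖ ≤ ‖y'‖ + (‖C' (adjoint B x)‖ + ‖C' (D z)‖) := by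
        have : y = y' - (C' (adjoint B x) + C' (D z)) := by
          rw [hy'def, map_add]; abel
        rw [this]
        refine (norm_sub_le _ _).trans ?_
        gcongr
        exact norm_add_le _ _
      have hy2 : ‖y‖ ≤ ‖y'‖ + K * ‖x‖ + L * ‖z‖ := by linarith [hKx, hLz, htri]
      exact my_bound hε₁ hε₂ hK0 hL0 (norm_nonneg x) (norm_nonneg y) (norm_nonneg z)
        (norm_nonneg y') hx1 hy1 hz1 hy2
    · -- explicit inverse
      refine ⟨S₁', -(S₁' ∘L (B ∘L C')), 0,
        -((C' ∘L adjoint B) ∘L S₁'),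
        C' + (C' ∘L adjoint B) ∘L (S₁' ∘L (B ∘L C')) + (C' ∘L D) ∘L (S₂' ∘L (adjoint D ∘L C')),
        -((C' ∘L D) ∘L S₂'),
        0, -(S₂' ∘L (adjoint D ∘L C')), S₂', ?_, rfl⟩
      refine ⟨?_, ?_, ?_, ?_, ?_, ?_, ?_, ?_, ?_, ?_, ?_, ?_, ?_, ?_, ?_, ?_, ?_, ?_⟩ <;>
        · simp only [hXadj, hAeq, hEeq, comp_neg, neg_comp, comp_add, add_comp, comp_zero,
            zero_comp, add_zero, zero_add, ContinuousLinearMap.comp_assoc,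
            my_cancel_left hCC', my_cancel_left hC'C, my_cancel_left hS₁S₁',
            my_cancel_left hS₁'S₁, my_cancel_left hS₂S₂', my_cancel_left hS₂'S₂,
            hCC', hC'C, hS₁S₁', hS₁'S₁, hS₂S₂', hS₂'S₂, ContinuousLinearMap.one_def,
            ContinuousLinearMap.comp_id, ContinuousLinearMap.id_comp]
          abel
  · -- uniqueness
    intro X hX
    obtain ⟨⟨-, -, -, ε, hε, hq⟩, N11, N12, N13, N21, N22, N23, N31, N32, N33, hinv, hN13⟩ := hX
    obtain ⟨e1, e2, e3, e4, e5, e6, e7, e8, e9, e10, e11, e12, e13, e14, e15, e16, e17, e18⟩ := hinv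
    -- pointwise versions
    have b1 : ∀ u : H₁, A (N11 u) + B (N21 u) + X (N31 u) = u := fun u => by
      have := congrArg (fun T : H₁ →L[ℂ] H₁ => T u) e1
      simpa using this
    have b4 : ∀ u : H₁, adjoint B (N11 u) + C (N21 u) + D (N31 u) = 0 := fun u => by
      have := congrArg (fun T : H₁ →L[ℂ] H₂ => T u) e4
      simpa using this
    have b7 : ∀ u : H₁, adjoint X (N11 u) + adjoint D (N21 u) + E (N31 u) = 0 := fun u => by
      have := congrArg (fun T : H₁ →L[ℂ] H₃ => T u) e7
      simpa using this
    -- coercivity of N11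
    have hcoer : ∀ u : H₁,
        ε * (‖N11 u‖ ^ 2 + ‖N21 u‖ ^ 2 + ‖N31 u‖ ^ 2) ≤ (inner ℂ (N11 u) u : ℂ).re := by
      intro u
      have hqu := hq (N11 u) (N21 u) (N31 u)
      rw [my_quad_eq A B X C D E (N11 u) (N21 u) (N31 u)] at hqu
      rw [b1 u, b4 u, b7 u] at hqu
      simp only [inner_zero_left, Complex.add_re, Complex.zero_re, add_zero] at hqu
      rw [my_re_symm (N11 u) u]
      exact hqu
    have hinj : ∀ u : H₁, N11 u = 0 → u = 0 := by
      intro u h0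
      have hc := hcoer u
      rw [h0] at hc
      have hc0 : ε * (‖(0:H₁)‖ ^ 2 + ‖N21 u‖ ^ 2 + ‖N31 u‖ ^ 2) ≤ 0 := by
        simpa using hc
      obtain ⟨hb0, hc0'⟩ := my_norms_zero hε hc0 (norm_nonneg (N21 u)) (norm_nonneg (N31 u))
      have h21 : N21 u = 0 := norm_eq_zero.mp hb0
      have h31 : N31 u = 0 := norm_eq_zero.mp hc0'
      have := b1 u
      rw [h0, h21, h31] at this
      simpa using this.symm
    -- algebra: N11 ∘L X = N11 ∘L (B ∘L C' ∘L D)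
    rw [hN13] at e11 e12
    have hN12 : N12 = -(N11 ∘L (B ∘L C')) := by
      have h' : N12 ∘L C = -(N11 ∘L B) := by
        have h := e11
        rw [zero_comp, add_zero] at h
        have h2 : N12 ∘L C + N11 ∘L B = 0 := by rw [add_comm]; exact h
        exact eq_neg_of_add_eq_zero_left h2
      calc N12 = (N12 ∘L C) ∘L C' := by
            rw [ContinuousLinearMap.comp_assoc, hCC', ContinuousLinearMap.one_def,
              ContinuousLinearMap.comp_id]
        _ = -(N11 ∘L (B ∘L C')) := by
            rw [h', neg_comp, ContinuousLinearMap.comp_assoc]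
    have hfin : N11 ∘L X = N11 ∘L (B ∘L C' ∘L D) := by
      have h := e12
      rw [zero_comp, add_zero, hN12, neg_comp] at h
      have h'' : N11 ∘L X = (N11 ∘L (B ∘L C')) ∘L D := add_neg_eq_zero.mp h
      rw [h'', ContinuousLinearMap.comp_assoc, ContinuousLinearMap.comp_assoc]
    ext z
    have hz : N11 (X z) = N11 ((B ∘L C' ∘L D) z) := by
      have := congrArg (fun T : H₃ →L[ℂ] H₁ => T z) hfin
      simpa using this
    have : N11 (X z - (B ∘L C' ∘L D) z) = 0 := by
      rw [map_sub, hz, sub_self]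
    have := hinj _ this
    have := sub_eq_zero.mp this
    simpa using this
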